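/- For every x ∈ [0,1]^k, every q ∈ ℝ^k, and every index 1 ≤ i ≤ k−1: ∂𝓛_k/∂q_i(q, x) = 0 if and only if x_{i+1} = √((B/k)·(2/(r_i + B/k))·(x_i − x_i²) + x_i²). -/

import Mathlib

/-- The discrete two-bidder Lagrangian on the grid `r_i = (i-1)·B/k`, `1 ≤ i ≤ k`,
with the convention `q 0 = 0`:
`𝓛_k(q, x) = Σ (q_i - q_{i-1}) r_i (1 - x_i²) + (B/k) Σ q_i (1 - x_i)² - λ (B/k) Σ (1 - x_i)`. -/
noncomputable def discreteLag (B lam : ℝ) (k : ℕ) (q x : ℕ → ℝ) : ℝ :=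
  (∑ i ∈ Finset.Icc 1 k, (q i - q (i - 1)) * (((i : ℝ) - 1) * B / k) * (1 - x i ^ 2))
    + (B / k) * (∑ i ∈ Finset.Icc 1 k, q i * (1 - x i) ^ 2)
    - lam * (B / k) * (∑ i ∈ Finset.Icc 1 k, (1 - x i))

private lemma upd_hasDeriv (q : ℕ → ℝ) (i j : ℕ) (t : ℝ) :
    HasDerivAt (fun s => Function.update q i s j) (if j = i then (1:ℝ) else 0) t := by
  by_cases h : j = i
  · subst h
    simp only [Function.update_self, if_pos rfl]
    exact hasDerivAt_id t
  · simp only [Function.update_of_ne h, if_neg h]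
    exact hasDerivAt_const t (q j)

/-- First-order condition in `q_i` for the discrete two-bidder Lagrangian: for
`x ∈ [0,1]^k`, `q ∈ ℝ^k` (with `q 0 = 0`) and `1 ≤ i ≤ k - 1`,
`∂𝓛_k/∂q_i(q, x) = 0` iff `x_{i+1} = √((B/k)·(2/(r_i + B/k))·(x_i - x_i²) + x_i²)`. -/
theorem discrete_foc_q (B lam : ℝ) (hB : 0 < B) (k : ℕ) (hk : 1 < k)
    (x q : ℕ → ℝ) (hq0 : q 0 = 0)
    (hx : ∀ i ∈ Finset.Icc 1 k, x i ∈ Set.Icc (0 : ℝ) 1)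
    (i : ℕ) (hi1 : 1 ≤ i) (hik : i ≤ k - 1) :
    deriv (fun t => discreteLag B lam k (Function.update q i t) x) (q i) = 0 ↔
      x (i + 1) = Real.sqrt
        ((B / k) * (2 / ((((i : ℝ) - 1) * B / k) + B / k)) * (x i - x i ^ 2) + x i ^ 2) := by
  have hk0 : (0:ℝ) < k := by positivity
  have hbk : (0:ℝ) < B / k := div_pos hB hk0
  have hik' : i + 1 ≤ k := by omega
  have hikk : i ≤ k := by omega
  have hi_mem : i ∈ Finset.Icc 1 k := Finset.mem_Icc.mpr ⟨hi1, hikk⟩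
  have hi1_mem : i + 1 ∈ Finset.Icc 1 k := Finset.mem_Icc.mpr ⟨by omega, hik'⟩
  set r : ℝ := ((i : ℝ) - 1) * B / k with hr
  have hr0 : 0 ≤ r := by
    have : (1:ℝ) ≤ (i:ℝ) := by exact_mod_cast hi1
    have : (0:ℝ) ≤ (i:ℝ) - 1 := by linarith
    positivity
  set c : ℝ := r + B / k with hc
  have hc0 : 0 < c := by positivity
  -- the derivative value
  set D : ℝ := r * (1 - x i ^ 2) - c * (1 - x (i+1) ^ 2) + (B / k) * (1 - x i) ^ 2 with hD
  have hderiv : deriv (fun t => discreteLag B lam k (Function.update q i t) x) (q i) = D := by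
    have hS1 : HasDerivAt (fun t => ∑ j ∈ Finset.Icc 1 k,
        (Function.update q i t j - Function.update q i t (j - 1)) * (((j : ℝ) - 1) * B / k)
          * (1 - x j ^ 2))
        (∑ j ∈ Finset.Icc 1 k, ((if j = i then (1:ℝ) else 0) - (if j - 1 = i then 1 else 0))
          * (((j : ℝ) - 1) * B / k) * (1 - x j ^ 2)) (q i) := by
      apply HasDerivAt.fun_sum
      intro j hj
      exact (((upd_hasDeriv q i j (q i)).sub (upd_hasDeriv q i (j-1) (q i))).mul_const
        _).mul_const _
    have hS2 : HasDerivAt (fun t => ∑ j ∈ Finset.Icc 1 k,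
        Function.update q i t j * (1 - x j) ^ 2)
        (∑ j ∈ Finset.Icc 1 k, (if j = i then (1:ℝ) else 0) * (1 - x j) ^ 2) (q i) := by
      apply HasDerivAt.fun_sum
      intro j hj
      exact (upd_hasDeriv q i j (q i)).mul_const _
    have htot : HasDerivAt (fun t => discreteLag B lam k (Function.update q i t) x)
        ((∑ j ∈ Finset.Icc 1 k, ((if j = i then (1:ℝ) else 0) - (if j - 1 = i then 1 else 0))
          * (((j : ℝ) - 1) * B / k) * (1 - x j ^ 2))
         + (B / k) * (∑ j ∈ Finset.Icc 1 k, (if j = i then (1:ℝ) else 0) * (1 - x j) ^ 2))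
        (q i) := by
      simpa [discreteLag] using (hS1.add (hS2.const_mul (B / k))).sub_const
        (lam * (B / k) * (∑ j ∈ Finset.Icc 1 k, (1 - x j)))
    rw [htot.deriv]
    -- compute the two sums
    have e1 : (∑ j ∈ Finset.Icc 1 k, ((if j = i then (1:ℝ) else 0)
          - (if j - 1 = i then 1 else 0)) * (((j : ℝ) - 1) * B / k) * (1 - x j ^ 2))
        = r * (1 - x i ^ 2) - c * (1 - x (i+1) ^ 2) := by
      have hsub : ({i, i+1} : Finset ℕ) ⊆ Finset.Icc 1 k := by
        intro j hj
        simp only [Finset.mem_insert, Finset.mem_singleton] at hj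
        rcases hj with rfl | rfl <;> simp [Finset.mem_Icc] <;> omega
      rw [← Finset.sum_subset hsub]
      · rw [Finset.sum_pair (by omega : i ≠ i + 1)]
        have h1 : ¬ (i - 1 = i) := by omega
        have h2 : ¬ (i + 1 = i) := by omega
        have h3 : (i + 1) - 1 = i := by omega
        have h4 : ((i + 1 : ℕ) : ℝ) - 1 = (i : ℝ) := by push_cast; ring
        rw [if_pos rfl, if_neg h1, if_neg h2, h3, if_pos rfl, h4]
        have h5 : (i : ℝ) * B / k = c := by
          rw [hc, hr]; field_simp; ring
        rw [h5]
        ring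
      · intro j hj hj'
        simp only [Finset.mem_insert, Finset.mem_singleton, not_or] at hj'
        have hj1 : 1 ≤ j := (Finset.mem_Icc.mp hj).1
        have hja : ¬ (j = i) := hj'.1
        have hjb : ¬ (j - 1 = i) := by omega
        rw [if_neg hja, if_neg hjb]
        ring
    have e2 : (∑ j ∈ Finset.Icc 1 k, (if j = i then (1:ℝ) else 0) * (1 - x j) ^ 2)
        = (1 - x i) ^ 2 := by
      rw [Finset.sum_congr rfl (fun j _ => by
        rw [ite_mul, one_mul, zero_mul])]
      rw [Finset.sum_ite_eq' (Finset.Icc 1 k) i (fun j => (1 - x j) ^ 2), if_pos hi_mem]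
    rw [e1, e2, hD]
  rw [hderiv]
  -- now the algebra
  set A : ℝ := (B / k) * (2 / c) * (x i - x i ^ 2) + x i ^ 2 with hA
  have key : D = c * (x (i+1) ^ 2 - A) := by
    rw [hD, hA, hc]
    field_simp
    ring
  have hxi := hx i hi_mem
  have hxi1 := hx (i+1) hi1_mem
  have hA0 : 0 ≤ A := by
    have h1 : 0 ≤ x i - x i ^ 2 := by nlinarith [hxi.1, hxi.2]
    have h2 : 0 ≤ (B / k) * (2 / c) := by positivity
    rw [hA]
    exact add_nonneg (mul_nonneg h2 h1) (sq_nonneg _)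
  constructor
  · intro h
    rw [key] at h
    have h' : x (i+1) ^ 2 - A = 0 := by
      rcases mul_eq_zero.mp h with h'' | h''
      · exact absurd h'' (ne_of_gt hc0)
      · exact h''
    have h2 : x (i+1) ^ 2 = A := by linarith
    rw [← h2, Real.sqrt_sq hxi1.1]
  · intro h
    rw [key]
    have h2 : x (i+1) ^ 2 = A := by rw [h, Real.sq_sqrt hA0]
    rw [h2]
    ring
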